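/- Under the hypotheses of the explicit formula for p_n^{(q,β)}: if additionally β(1+z²) = q² + z², then p_n^{(q,β)}(υ(z)) = (q²;q)_n / (z^n ((q²+z²)/(1+z²);q)_n). -/

import Mathlib

/-- The finite q-Pochhammer symbol `(a;Q)_n = ∏_{j=0}^{n-1} (1 - a Q^j)`. -/
def qPoch (a Q : ℂ) (n : ℕ) : ℂ := ∏ j ∈ Finset.range n, (1 - a * Q ^ j)

set_option maxHeartbeats 1600000 in
theorem stmt_13 (q β : ℝ) (hq : q ∈ Set.Ioo (0 : ℝ) 1) (hβ : β < 1)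
    (z : ℂ) (hz : z ≠ 0)
    (hspec : (β : ℂ) * (1 + z ^ 2) = (q : ℂ) ^ 2 + z ^ 2)
    (p : ℕ → ℂ → ℂ)
    (hp0 : ∀ x, p 0 x = 1) (hp1 : ∀ x, p 1 x = x)
    (hprec : ∀ n : ℕ, 1 ≤ n → ∀ x : ℂ,
      p (n + 1) x = x * p n x -
        ((1 - (q : ℂ) ^ n) / (1 - (β : ℂ) * (q : ℂ) ^ (n - 1))) *
        ((1 - (q : ℂ) ^ (n + 1)) / (1 - (β : ℂ) * (q : ℂ) ^ n)) * p (n - 1) x) :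
    ∀ n : ℕ, p n (z + z⁻¹) =
      qPoch ((q : ℂ) ^ 2) (q : ℂ) n /
        (z ^ n * qPoch (((q : ℂ) ^ 2 + z ^ 2) / (1 + z ^ 2)) (q : ℂ) n) := by
  obtain ⟨hq0, hq1⟩ := hq
  have h1z : (1:ℂ) + z^2 ≠ 0 := by
    intro h
    have hz2 : z^2 = -1 := by linear_combination h
    rw [hz2] at hspec
    have hq2 : (q:ℂ)^2 = 1 := by linear_combination -hspec
    have : (q:ℝ)^2 = 1 := by exact_mod_cast hq2
    nlinarith
  have ha : ((q:ℂ)^2 + z^2) / (1 + z^2) = (β:ℂ) := by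
    field_simp
    linear_combination -hspec
  have hbq : ∀ k : ℕ, (1:ℂ) - (β:ℂ) * (q:ℂ)^k ≠ 0 := by
    intro k
    have hqk : (0:ℝ) < q^k := pow_pos hq0 k
    have hqk1 : q^k ≤ 1 := pow_le_one₀ hq0.le hq1.le
    have hr : (1:ℝ) - β * q^k ≠ 0 := by nlinarith [mul_pos (by linarith : (0:ℝ) < 1 - β) hqk]
    intro h
    apply hr
    have : ((1 - β * q^k : ℝ) : ℂ) = 0 := by push_cast; linear_combination h
    exact_mod_cast this
  have hqn : ∀ k : ℕ, (1:ℂ) - (q:ℂ)^(k+1) ≠ 0 := by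
    intro k
    have hqk : (0:ℝ) < q^(k+1) := pow_pos hq0 _
    have hqk1 : q^(k+1) < 1 := pow_lt_one₀ hq0.le hq1 (by omega)
    intro h
    have : ((1 - q^(k+1) : ℝ) : ℂ) = 0 := by push_cast; linear_combination h
    have : (1:ℝ) - q^(k+1) = 0 := by exact_mod_cast this
    linarith
  have hB : ∀ n : ℕ, qPoch (β:ℂ) (q:ℂ) n ≠ 0 := by
    intro n
    rw [qPoch, Finset.prod_ne_zero_iff]
    exact fun j _ => hbq j
  simp only [ha]
  suffices H : ∀ n : ℕ, p n (z + z⁻¹) =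
      qPoch ((q : ℂ) ^ 2) (q : ℂ) n / (z ^ n * qPoch (β:ℂ) (q : ℂ) n) ∧
      p (n+1) (z + z⁻¹) =
      qPoch ((q : ℂ) ^ 2) (q : ℂ) (n+1) / (z ^ (n+1) * qPoch (β:ℂ) (q : ℂ) (n+1)) by
    exact fun n => (H n).1
  intro n
  induction n with
  | zero =>
    constructor
    · simp [qPoch, hp0]
    · rw [hp1]
      simp only [qPoch, zero_add, Finset.prod_range_one, pow_zero, mul_one, pow_one]
      have hb0 : (1:ℂ) - (β:ℂ) ≠ 0 := by simpa using hbq 0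
      field_simp
      linear_combination (-1) * hspec
  | succ n ih =>
    refine ⟨ih.2, ?_⟩
    rw [hprec (n+1) (by omega)]
    simp only [Nat.add_sub_cancel]
    rw [ih.1, ih.2]
    have e1 : qPoch ((q:ℂ)^2) (q:ℂ) (n+1) = qPoch ((q:ℂ)^2) (q:ℂ) n * (1 - (q:ℂ)^2 * (q:ℂ)^n) := by
      rw [qPoch, qPoch, Finset.prod_range_succ]
    have e2 : qPoch ((q:ℂ)^2) (q:ℂ) (n+2) = qPoch ((q:ℂ)^2) (q:ℂ) n * (1 - (q:ℂ)^2 * (q:ℂ)^n) * (1 - (q:ℂ)^2 * (q:ℂ)^(n+1)) := by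
      rw [qPoch, qPoch, Finset.prod_range_succ, Finset.prod_range_succ]
    have f1 : qPoch (β:ℂ) (q:ℂ) (n+1) = qPoch (β:ℂ) (q:ℂ) n * (1 - (β:ℂ) * (q:ℂ)^n) := by
      rw [qPoch, qPoch, Finset.prod_range_succ]
    have f2 : qPoch (β:ℂ) (q:ℂ) (n+2) = qPoch (β:ℂ) (q:ℂ) n * (1 - (β:ℂ) * (q:ℂ)^n) * (1 - (β:ℂ) * (q:ℂ)^(n+1)) := by
      rw [qPoch, qPoch, Finset.prod_range_succ, Finset.prod_range_succ]
    have hn1 := hqn n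
    have hn2 := hqn (n+1)
    have hb1 := hbq n
    have hb2 := hbq (n+1)
    have hBn := hB n
    rw [e1, e2, f1, f2]
    generalize hPg : qPoch ((q:ℂ)^2) (q:ℂ) n = P at *
    generalize hBg : qPoch ((β:ℂ)) (q:ℂ) n = B at *
    generalize hsg : (q:ℂ)^2 = s at *
    simp only [pow_succ] at hn1 hn2 hb1 hb2 ⊢
    generalize hqg : (q:ℂ)^n = t at hn1 hn2 hb1 hb2 ⊢
    have hw : z^n ≠ 0 := pow_ne_zero n hz
    generalize hzg : z^n = w at hw ⊢
    have hs : s = (β:ℂ) * (1 + z^2) - z^2 := by linear_combination -hspec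
    have hco : (1:ℂ) - t * (q:ℂ) * (q:ℂ) = 1 - s * t := by rw [← hsg]; ring
    rw [hco]
    subst hs
    have hx : z + z⁻¹ = (1 + z^2)/z := by field_simp; ring
    rw [hx, div_mul_div_comm, div_mul_div_comm, div_mul_div_comm,
        div_sub_div _ _ (by apply_rules [mul_ne_zero, hz, hw, hBn, hb1, hb2])
          (by apply_rules [mul_ne_zero, hz, hw, hBn, hb1, hb2]),
        div_eq_div_iff (by apply_rules [mul_ne_zero, hz, hw, hBn, hb1, hb2])
          (by apply_rules [mul_ne_zero, hz, hw, hBn, hb1, hb2])]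
    ring
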